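/- If a polyhedron P = {x ∈ ℚⁿ | Ax ≥ D} (with A a p×n rational matrix and D ∈ ℚᵖ) is nonempty and bounded, then there is no nonzero x ∈ ℚⁿ with Ax ≥ 0. Conversely, if there is no nonzero x with Ax ≥ 0, then P is bounded. -/

import Mathlib

open Matrix Filter Topology


private lemma stmt0_transfer (p n : ℕ) (A : Matrix (Fin p) (Fin n) ℚ) (u : Fin n → ℝ) (hu : u ≠ 0)
    (hAu : ∀ i, 0 ≤ ((A.map (Rat.cast : ℚ → ℝ)) *ᵥ u) i) :
    ∃ x : Fin n → ℚ, x ≠ 0 ∧ ∀ i, 0 ≤ (A *ᵥ x) i := by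
  classical
  set AR := A.map (Rat.cast : ℚ → ℝ) with hAR
  set V : Submodule ℚ ℝ := Submodule.span ℚ (Set.range u) with hV
  haveI : FiniteDimensional ℚ V := FiniteDimensional.span_of_finite ℚ (Set.finite_range u)
  set m := Module.finrank ℚ V with hm
  set b : Module.Basis (Fin m) ℚ V := Module.finBasis ℚ V with hb
  have hmem : ∀ j, u j ∈ V := fun j => Submodule.subset_span ⟨j, rfl⟩
  set r : Fin n → Fin m → ℚ := fun j t => b.repr ⟨u j, hmem j⟩ t with hr
  have hrep : ∀ j, u j = ∑ t, (r j t : ℝ) * (b t : ℝ) := by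
    intro j
    have h1 := b.sum_repr ⟨u j, hmem j⟩
    have h2 := congrArg (Submodule.subtype V) h1
    simp only [map_sum, Submodule.coe_subtype, SetLike.val_smul, Rat.smul_def] at h2
    exact h2.symm
  set α : Fin p → Fin m → ℚ := fun i t => (A *ᵥ (fun j => r j t)) i with hα
  have hAu_expand : ∀ i, (AR *ᵥ u) i = ∑ t, (α i t : ℝ) * (b t : ℝ) := by
    intro i
    simp only [hAR, Matrix.mulVec, dotProduct, Matrix.map_apply, hα]
    calc ∑ j, (A i j : ℝ) * u j
        = ∑ j, ∑ t, (A i j : ℝ) * ((r j t : ℝ) * (b t : ℝ)) := by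
          refine Finset.sum_congr rfl fun j _ => ?_
          rw [hrep j, Finset.mul_sum]
      _ = ∑ t, ∑ j, (A i j : ℝ) * ((r j t : ℝ) * (b t : ℝ)) := Finset.sum_comm
      _ = ∑ t, ((∑ j, A i j * r j t : ℚ) : ℝ) * (b t : ℝ) := by
          refine Finset.sum_congr rfl fun t _ => ?_
          push_cast
          rw [Finset.sum_mul]
          exact Finset.sum_congr rfl fun j _ => by ring
  have hbli : LinearIndependent ℚ (fun t => ((b t : ℝ))) := by
    have := b.linearIndependent.map' V.subtype V.ker_subtype
    exact this
  have hzero : ∀ i, (AR *ᵥ u) i = 0 → ∀ t, α i t = 0 := by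
    intro i hi
    have h0 : ∑ t, α i t • ((b t : ℝ)) = 0 := by
      rw [← hi, hAu_expand i]
      exact Finset.sum_congr rfl fun t _ => (Rat.smul_def _ _).symm
    exact Fintype.linearIndependent_iff.mp hbli (fun t => α i t) h0
  -- continuity / density
  set F : (Fin m → ℝ) → (Fin n → ℝ) := fun c j => ∑ t, c t * (r j t : ℝ) with hF
  set G : Fin p → (Fin m → ℝ) → ℝ := fun i c => ∑ t, c t * (α i t : ℝ) with hG
  have hFc : Continuous F :=
    continuous_pi fun j => continuous_finset_sum _ fun t _ => (continuous_apply t).mul continuous_const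
  have hGc : ∀ i, Continuous (G i) := fun i =>
    continuous_finset_sum _ fun t _ => (continuous_apply t).mul continuous_const
  set S : Set (Fin m → ℝ) := {c | F c ≠ 0} ∩ ⋂ i, {c | 0 < (AR *ᵥ u) i → 0 < G i c} with hS
  have hSopen : IsOpen S := by
    apply IsOpen.inter
    · exact isOpen_ne.preimage hFc
    · refine isOpen_iInter_of_finite fun i => ?_
      by_cases hi : 0 < (AR *ᵥ u) i
      · simp only [hi, true_implies]
        exact (isOpen_lt continuous_const (hGc i))
      · simp only [hi, false_implies, Set.setOf_true]
        exact isOpen_univ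
  set br : Fin m → ℝ := fun t => (b t : ℝ) with hbr
  have hbrS : br ∈ S := by
    constructor
    · have hFbr : F br = u := funext fun j => by
        rw [hF, hrep j]
        exact Finset.sum_congr rfl fun t _ => by ring
      show F br ≠ 0
      rw [hFbr]; exact hu
    · simp only [Set.mem_iInter, Set.mem_setOf_eq]
      intro i hi
      have : G i br = (AR *ᵥ u) i := by
        rw [hAu_expand i, hG]
        exact Finset.sum_congr rfl fun t _ => by ring
      rw [this]; exact hi
  have hdense : Dense (Set.pi Set.univ (fun _ : Fin m => Set.range (Rat.cast : ℚ → ℝ))) :=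
    dense_pi Set.univ fun i _ => Rat.denseRange_cast
  obtain ⟨creal, hcmem, hcS⟩ := hdense.exists_mem_open hSopen ⟨br, hbrS⟩
  have hcrat : ∀ t, ∃ q : ℚ, (q : ℝ) = creal t := fun t => hcmem t (Set.mem_univ t)
  choose crat hcrat using hcrat
  refine ⟨fun j => ∑ t, crat t * r j t, ?_, ?_⟩
  · intro hx0
    have hF0 : F creal = 0 := by
      funext j
      have hj := congrFun hx0 j
      simp only [Pi.zero_apply] at hj ⊢
      rw [hF]
      calc ∑ t, creal t * (r j t : ℝ) = ((∑ t, crat t * r j t : ℚ) : ℝ) := by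
            push_cast
            exact Finset.sum_congr rfl fun t _ => by rw [hcrat t]
        _ = 0 := by rw [hj]; norm_num
    exact hcS.1 hF0
  · intro i
    have hxi : ((A *ᵥ (fun j => ∑ t, crat t * r j t)) i : ℚ) = ∑ t, crat t * α i t := by
      simp only [Matrix.mulVec, dotProduct, hα]
      calc ∑ j, A i j * ∑ t, crat t * r j t
          = ∑ j, ∑ t, crat t * (A i j * r j t) := by
            refine Finset.sum_congr rfl fun j _ => ?_
            rw [Finset.mul_sum]
            exact Finset.sum_congr rfl fun t _ => by ring
        _ = ∑ t, crat t * ∑ j, A i j * r j t := by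
            rw [Finset.sum_comm]
            exact Finset.sum_congr rfl fun t _ => by rw [Finset.mul_sum]
    rcases (hAu i).lt_or_eq with hi | hi
    · have h1 : 0 < G i creal := Set.mem_iInter.mp hcS.2 i hi
      have h2 : G i creal = (((A *ᵥ (fun j => ∑ t, crat t * r j t)) i : ℚ) : ℝ) := by
        rw [hxi, hG]
        push_cast
        exact Finset.sum_congr rfl fun t _ => by rw [hcrat t]
      rw [h2] at h1
      exact_mod_cast le_of_lt h1
    · rw [hxi]
      have : ∀ t, α i t = 0 := hzero i hi.symm
      simp [this]

private lemma stmt0_nnrm (q : ℚ) : ‖(q:ℝ)‖₊ = ‖q‖₊ := by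
  ext; rw [coe_nnnorm, coe_nnnorm, Rat.norm_cast_real]

private lemma stmt0_unbounded_recession (p n : ℕ) (A : Matrix (Fin p) (Fin n) ℚ) (D : Fin p → ℚ)
    (hnb : ¬ Bornology.IsBounded {x : Fin n → ℚ | ∀ i, D i ≤ (A *ᵥ x) i}) :
    ∃ u : Fin n → ℝ, u ≠ 0 ∧ ∀ i, 0 ≤ ((A.map (Rat.cast : ℚ → ℝ)) *ᵥ u) i := by
  classical
  set AR := A.map (Rat.cast : ℚ → ℝ) with hAR
  rw [isBounded_iff_forall_norm_le] at hnb
  push_neg at hnb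
  have hx : ∀ k : ℕ, ∃ x : Fin n → ℚ, (∀ i, D i ≤ (A *ᵥ x) i) ∧ (k : ℝ) < ‖x‖ := by
    intro k
    obtain ⟨x, hx1, hx2⟩ := hnb k
    exact ⟨x, hx1, hx2⟩
  choose x hxP hxn using hx
  set y : ℕ → Fin n → ℝ := fun k j => (x k j : ℝ) with hy
  have hyn : ∀ k, ‖y k‖ = ‖x k‖ := by
    intro k
    simp only [hy, Pi.norm_def, Pi.nnnorm_def, stmt0_nnrm]
  have hypos : ∀ k, 0 < ‖y k‖ := fun k => (hyn k).symm ▸ lt_of_le_of_lt (Nat.cast_nonneg k) (hxn k)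
  set u : ℕ → Fin n → ℝ := fun k => ‖y k‖⁻¹ • y k with hu
  have husph : ∀ k, u k ∈ Metric.sphere (0 : Fin n → ℝ) 1 := by
    intro k
    simp only [Metric.mem_sphere, dist_zero_right, hu, norm_smul, norm_inv, norm_norm]
    exact inv_mul_cancel₀ (hypos k).ne'
  obtain ⟨u₀, hu₀mem, φ, hφ, hconv⟩ :=
    (isCompact_sphere (0 : Fin n → ℝ) 1).tendsto_subseq husph
  have hu₀ : u₀ ≠ 0 := by
    intro h0
    rw [h0] at hu₀mem
    simp at hu₀mem
  refine ⟨u₀, hu₀, fun i => ?_⟩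
  -- continuity of v ↦ (AR *ᵥ v) i
  have hcont : Continuous (fun v : Fin n → ℝ => (AR *ᵥ v) i) := by
    simp only [Matrix.mulVec, dotProduct]
    exact continuous_finset_sum _ fun j _ => continuous_const.mul (continuous_apply j)
  have htend : Tendsto (fun k => (AR *ᵥ u (φ k)) i) atTop (𝓝 ((AR *ᵥ u₀) i)) :=
    (hcont.tendsto u₀).comp hconv
  -- lower bound
  have hcastmv : ∀ k, (AR *ᵥ y k) i = (((A *ᵥ x k) i : ℚ) : ℝ) := by
    intro k
    rw [hAR]
    have := (RingHom.map_mulVec (Rat.castHom ℝ) A (x k) i).symm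
    simpa [Function.comp_def, hy] using this
  have hlb : ∀ k, ‖y k‖⁻¹ * ((D i : ℚ) : ℝ) ≤ (AR *ᵥ u k) i := by
    intro k
    have h1 : (AR *ᵥ u k) i = ‖y k‖⁻¹ * (AR *ᵥ y k) i := by
      rw [hu, Matrix.mulVec_smul]
      simp
    rw [h1, hcastmv k]
    have : ((D i : ℚ) : ℝ) ≤ (((A *ᵥ x k) i : ℚ) : ℝ) := by exact_mod_cast hxP k i
    exact mul_le_mul_of_nonneg_left this (inv_nonneg.mpr (hypos k).le)
  have hnormtend : Tendsto (fun k => ‖y (φ k)‖) atTop atTop := by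
    apply tendsto_atTop_mono (fun k => ?_) tendsto_natCast_atTop_atTop
    calc (k : ℝ) ≤ (φ k : ℝ) := by exact_mod_cast hφ.le_apply
      _ ≤ ‖x (φ k)‖ := (hxn (φ k)).le
      _ = ‖y (φ k)‖ := (hyn (φ k)).symm
  have hzero : Tendsto (fun k => ‖y (φ k)‖⁻¹ * ((D i : ℚ) : ℝ)) atTop (𝓝 0) := by
    have := (hnormtend.inv_tendsto_atTop).mul_const ((D i : ℚ) : ℝ)
    simpa using this
  exact le_of_tendsto_of_tendsto' hzero htend fun k => hlb (φ k)

private lemma stmt0_easy_dir (p n : ℕ) (A : Matrix (Fin p) (Fin n) ℚ) (D : Fin p → ℚ)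
    (hne : {x : Fin n → ℚ | ∀ i, D i ≤ (A *ᵥ x) i}.Nonempty)
    (hb : Bornology.IsBounded {x : Fin n → ℚ | ∀ i, D i ≤ (A *ᵥ x) i}) :
    ¬ ∃ x : Fin n → ℚ, x ≠ 0 ∧ ∀ i, 0 ≤ (A *ᵥ x) i := by
  rintro ⟨x, hx0, hAx⟩
  obtain ⟨y, hy⟩ := hne
  obtain ⟨R, hR⟩ := isBounded_iff_forall_norm_le.mp hb
  obtain ⟨j, hj⟩ := Function.ne_iff.mp hx0
  simp only [Pi.zero_apply] at hj
  have hxj : (0:ℝ) < ‖x j‖ := norm_pos_iff.mpr hj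
  obtain ⟨N, hN⟩ := exists_nat_gt ((R + ‖y j‖) / ‖x j‖)
  have hNx : R + ‖y j‖ < (N : ℝ) * ‖x j‖ := by
    rwa [div_lt_iff₀ hxj] at hN
  set z : Fin n → ℚ := y + (N : ℚ) • x with hz
  have hzP : z ∈ {x : Fin n → ℚ | ∀ i, D i ≤ (A *ᵥ x) i} := by
    intro i
    rw [hz, Matrix.mulVec_add, Matrix.mulVec_smul]
    have h1 : (0:ℚ) ≤ (N:ℚ) * (A *ᵥ x) i := mul_nonneg (by positivity) (hAx i)
    have := hy i
    simp only [Pi.add_apply, Pi.smul_apply, smul_eq_mul]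
    linarith
  have hzR := hR z hzP
  have h1 : ‖z j‖ ≤ ‖z‖ := norm_le_pi_norm z j
  have h2 : ‖(N:ℚ) * x j‖ ≤ ‖z j‖ + ‖y j‖ := by
    have : (N:ℚ) * x j = z j - y j := by
      simp only [hz, Pi.add_apply, Pi.smul_apply, smul_eq_mul]
      ring
    rw [this]
    exact norm_sub_le _ _
  have h3 : ‖(N:ℚ) * x j‖ = (N:ℝ) * ‖x j‖ := by
    rw [norm_mul]
    congr 1
    rw [← Rat.norm_cast_real]
    push_cast
    simp
  linarith

/-- P = {x ∈ ℚⁿ | Ax ≥ D} nonempty and bounded implies there is no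
nonzero x with Ax ≥ 0; conversely, if there is no nonzero x with Ax ≥ 0 then P is bounded. -/
theorem stmt_0 (p n : ℕ) (A : Matrix (Fin p) (Fin n) ℚ) (D : Fin p → ℚ)
    (P : Set (Fin n → ℚ)) (hP : P = {x : Fin n → ℚ | ∀ i, D i ≤ A.mulVec x i}) :
    ((P.Nonempty ∧ Bornology.IsBounded P) →
      ¬ ∃ x : Fin n → ℚ, x ≠ 0 ∧ ∀ i, 0 ≤ A.mulVec x i) ∧
    ((¬ ∃ x : Fin n → ℚ, x ≠ 0 ∧ ∀ i, 0 ≤ A.mulVec x i) →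
      Bornology.IsBounded P) := by
  subst hP
  constructor
  · rintro ⟨hne, hb⟩
    exact stmt0_easy_dir p n A D hne hb
  · intro h
    by_contra hnb
    obtain ⟨u, hu0, hAu⟩ := stmt0_unbounded_recession p n A D hnb
    exact h (stmt0_transfer p n A u hu0 hAu)
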